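/- Let E ∈ M_n(T) be a full rank tropical idempotent, let N < -Σ_{i,j with E_{ij} finite} |E_{ij}|, and for m ∈ ℕ let F_m be the idempotent power of the matrix obtained by replacing every -∞ entry of E with m·N. Then each F_m is a full rank idempotent over the finitary tropical semiring ℝ, with explicit entries (F_m)_{ij} = E_{ij} if E_{ij} ≠ -∞ and (F_m)_{ij} = max_t E_{it} + mN + max_s E_{sj} otherwise; moreover C(F_m) ⊆ C(F_{m+1}) for all m, and C(E) ∩ ℝ^n = ⋃_m (C(F_m) \ {(-∞,...,-∞)}). -/

import Mathlib

open scoped Classical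

/-- The tropical (max-plus) semiring carrier: `ℝ ∪ {-∞}`, where `⊔` is tropical
addition (max) and `+` is tropical multiplication (with `⊥ = -∞` absorbing). -/
abbrev Trop : Type := WithBot ℝ

/-- Tropical matrix multiplication: `(A ⊗ B) i j = max_k (A i k + B k j)`. -/
def tmul {n m p : ℕ} (A : Fin n → Fin m → Trop) (B : Fin m → Fin p → Trop) :
    Fin n → Fin p → Trop :=
  fun i j => Finset.univ.sup fun k => A i k + B k j

/-- Tropical matrix-vector multiplication (column vector on the right). -/
def tvmul {n m : ℕ} (A : Fin n → Fin m → Trop) (v : Fin m → Trop) : Fin n → Trop :=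
  fun i => Finset.univ.sup fun k => A i k + v k

/-- Tropical vector-matrix multiplication (row vector on the left). -/
def vtmul {n m : ℕ} (v : Fin n → Trop) (A : Fin n → Fin m → Trop) : Fin m → Trop :=
  fun j => Finset.univ.sup fun k => v k + A k j

/-- The tropical identity matrix: `0` on the diagonal, `-∞` elsewhere. -/
def tId (n : ℕ) : Fin n → Fin n → Trop :=
  fun i j => if i = j then ((0 : ℝ) : Trop) else ⊥

/-- A monomial matrix: exactly one entry different from `-∞` in each row and each column. -/
def IsMonomial {n : ℕ} (P : Fin n → Fin n → Trop) : Prop :=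
  (∀ i, ∃! j, P i j ≠ ⊥) ∧ (∀ j, ∃! i, P i j ≠ ⊥)

/-- A `T`-subsemimodule of `T^n`: closed under tropical addition (max) and scaling. -/
def IsTropSubmodule {n : ℕ} (S : Set (Fin n → Trop)) : Prop :=
  (∀ x ∈ S, ∀ y ∈ S, x ⊔ y ∈ S) ∧
  (∀ c : Trop, ∀ x ∈ S, (fun i => c + x i) ∈ S)

/-- The `T`-subsemimodule generated by a set of vectors. -/
def genBy {n : ℕ} (G : Set (Fin n → Trop)) : Set (Fin n → Trop) :=
  ⋂₀ {S | IsTropSubmodule S ∧ G ⊆ S}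

/-- The column space of a tropical matrix. -/
def colSpace {n m : ℕ} (A : Fin n → Fin m → Trop) : Set (Fin n → Trop) :=
  genBy {v | ∃ j, v = fun i => A i j}

/-- The row space of a tropical matrix. -/
def rowSpace {n m : ℕ} (A : Fin n → Fin m → Trop) : Set (Fin m → Trop) :=
  genBy {v | ∃ i, v = fun j => A i j}

/-- The column rank: minimum cardinality of a generating set of the column space. -/
noncomputable def colRank {n m : ℕ} (A : Fin n → Fin m → Trop) : ℕ :=
  sInf {k | ∃ G : Finset (Fin n → Trop), G.card = k ∧ genBy (↑G) = colSpace A}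

/-- The row rank: minimum cardinality of a generating set of the row space. -/
noncomputable def rowRank {n m : ℕ} (A : Fin n → Fin m → Trop) : ℕ :=
  sInf {k | ∃ G : Finset (Fin m → Trop), G.card = k ∧ genBy (↑G) = rowSpace A}

/-- Isomorphism of tropical subsemimodules (given by a bijection preserving
tropical addition and scaling). -/
def TropIso {n m : ℕ} (S : Set (Fin n → Trop)) (S' : Set (Fin m → Trop)) : Prop :=
  ∃ f : (Fin n → Trop) → (Fin m → Trop),
    Set.BijOn f S S' ∧
    (∀ x ∈ S, ∀ y ∈ S, f (x ⊔ y) = f x ⊔ f y) ∧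
    (∀ c : Trop, ∀ x ∈ S, f (fun i => c + x i) = fun i => c + f x i)

/-- The `H`-class of a matrix `A` in `M(T)` (among matrices of the same shape),
characterised by equality of column and row spaces. -/
def HSet {n m : ℕ} (A : Fin n → Fin m → Trop) : Set (Fin n → Fin m → Trop) :=
  {B | colSpace B = colSpace A ∧ rowSpace B = rowSpace A}

/-- Adjacency of the coloured bipartite graph `B_A` of a tropical matrix. -/
def BAdj {r c : ℕ} (A : Fin r → Fin c → Trop) :
    (Fin r ⊕ Fin c) → (Fin r ⊕ Fin c) → Prop
  | Sum.inl i, Sum.inr j => A i j ≠ ⊥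
  | Sum.inr j, Sum.inl i => A i j ≠ ⊥
  | _, _ => False

/-- Connectedness of the bipartite graph `B_A`. -/
def BConnected {r c : ℕ} (A : Fin r → Fin c → Trop) : Prop :=
  ∀ x y : Fin r ⊕ Fin c, Relation.ReflTransGen (BAdj A) x y

/-- `lam` is a tropical eigenvalue of `P`. -/
def IsEig {n : ℕ} (P : Fin n → Fin n → Trop) (lam : Trop) : Prop :=
  ∃ v : Fin n → Trop, v ≠ (fun _ => ⊥) ∧ tvmul P v = fun i => lam + v i

/-- The group `G_A` of monomial matrices `P` with `C(PA) = C(A)`. -/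
def GA {r c : ℕ} (A : Fin r → Fin c → Trop) : Set (Fin r → Fin r → Trop) :=
  {P | IsMonomial P ∧ colSpace (tmul P A) = colSpace A}

/-- The dual group `{}_AG` of monomial matrices `Q` with `R(AQ) = R(A)`. -/
def AGr {r c : ℕ} (A : Fin r → Fin c → Trop) : Set (Fin c → Fin c → Trop) :=
  {Q | IsMonomial Q ∧ rowSpace (tmul A Q) = rowSpace A}

/-- Tropical matrix power: `tpow A 0 = I`, `tpow A (t+1) = A ⊗ tpow A t`. -/
def tpow {n : ℕ} (A : Fin n → Fin n → Trop) : ℕ → (Fin n → Fin n → Trop)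
  | 0 => tId n
  | t + 1 => tmul A (tpow A t)

namespace S14


lemma add_sup' (a b c : Trop) : a + (b ⊔ c) = (a+b) ⊔ (a+c) := by
  rcases le_total b c with h | h
  · rw [sup_eq_right.2 h, sup_eq_right.2 (add_le_add_right h a)]
  · rw [sup_eq_left.2 h, sup_eq_left.2 (add_le_add_right h a)]

lemma sup_add' (a b c : Trop) : (a ⊔ b) + c = (a+c) ⊔ (b+c) := by
  rcases le_total a b with h | h
  · rw [sup_eq_right.2 h, sup_eq_right.2 (add_le_add_left h c)]
  · rw [sup_eq_left.2 h, sup_eq_left.2 (add_le_add_left h c)]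

lemma add_finsup {ι : Type*} (s : Finset ι) (a : Trop) (f : ι → Trop) :
    a + s.sup f = s.sup (fun k => a + f k) := by
  classical
  induction s using Finset.induction with
  | empty => simp [WithBot.add_bot]
  | insert _ _ _ ih => simp [Finset.sup_insert, add_sup', ih]

lemma finsup_add {ι : Type*} (s : Finset ι) (a : Trop) (f : ι → Trop) :
    s.sup f + a = s.sup (fun k => f k + a) := by
  classical
  induction s using Finset.induction with
  | empty => simp [WithBot.bot_add]
  | insert _ _ _ ih => simp [Finset.sup_insert, sup_add', ih]

lemma finsup_sup {ι : Type*} (s : Finset ι) (f g : ι → Trop) :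
    s.sup f ⊔ s.sup g = s.sup (fun k => f k ⊔ g k) := by
  apply le_antisymm
  · exact sup_le (Finset.sup_mono_fun fun k _ => le_sup_left)
      (Finset.sup_mono_fun fun k _ => le_sup_right)
  · exact Finset.sup_le fun k hk => sup_le_sup (Finset.le_sup hk) (Finset.le_sup hk)

lemma tmul_assoc {n m p q : ℕ} (A : Fin n → Fin m → Trop) (B : Fin m → Fin p → Trop)
    (C : Fin p → Fin q → Trop) : tmul (tmul A B) C = tmul A (tmul B C) := by
  funext i j
  show Finset.univ.sup (fun l => (Finset.univ.sup fun k => A i k + B k l) + C l j)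
     = Finset.univ.sup (fun k => A i k + Finset.univ.sup fun l => B k l + C l j)
  calc Finset.univ.sup (fun l => (Finset.univ.sup fun k => A i k + B k l) + C l j)
      = Finset.univ.sup (fun l => Finset.univ.sup fun k => (A i k + B k l) + C l j) := by
        apply Finset.sup_congr rfl; intro l _; rw [finsup_add]
    _ = Finset.univ.sup (fun k => Finset.univ.sup fun l => (A i k + B k l) + C l j) :=
        Finset.sup_comm _ _ _
    _ = Finset.univ.sup (fun k => A i k + Finset.univ.sup fun l => B k l + C l j) := by
        apply Finset.sup_congr rfl; intro k _
        rw [add_finsup]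
        apply Finset.sup_congr rfl; intro l _; rw [add_assoc]

lemma sup_ind {n : ℕ} (j : Fin n) (f : Fin n → Trop) :
    (Finset.univ.sup fun k => f k + (if k = j then ((0:ℝ):Trop) else ⊥)) = f j := by
  apply le_antisymm
  · apply Finset.sup_le
    intro k _
    by_cases h : k = j
    · subst h; simp
    · simp [h, WithBot.add_bot]
  · have := Finset.le_sup (f := fun k => f k + (if k = j then ((0:ℝ):Trop) else ⊥))
      (Finset.mem_univ j)
    simpa using this

lemma sup_ind' {n : ℕ} (j : Fin n) (f : Fin n → Trop) :
    (Finset.univ.sup fun k => (if j = k then ((0:ℝ):Trop) else ⊥) + f k) = f j := by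
  apply le_antisymm
  · apply Finset.sup_le
    intro k _
    by_cases h : j = k
    · subst h; simp
    · simp [h, WithBot.bot_add]
  · have := Finset.le_sup (f := fun k => (if j = k then ((0:ℝ):Trop) else ⊥) + f k)
      (Finset.mem_univ j)
    simpa using this

lemma tmul_tId {n m : ℕ} (A : Fin n → Fin m → Trop) : tmul A (tId m) = A := by
  funext i j; exact sup_ind j (fun k => A i k)

lemma tId_tmul {n m : ℕ} (A : Fin n → Fin m → Trop) : tmul (tId n) A = A := by
  funext i j; exact sup_ind' i (fun k => A k j)

lemma tvmul_assoc {n m p : ℕ} (A : Fin n → Fin m → Trop) (B : Fin m → Fin p → Trop)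
    (v : Fin p → Trop) : tvmul (tmul A B) v = tvmul A (tvmul B v) := by
  funext i
  show Finset.univ.sup (fun l => (Finset.univ.sup fun k => A i k + B k l) + v l)
     = Finset.univ.sup (fun k => A i k + Finset.univ.sup fun l => B k l + v l)
  calc Finset.univ.sup (fun l => (Finset.univ.sup fun k => A i k + B k l) + v l)
      = Finset.univ.sup (fun l => Finset.univ.sup fun k => (A i k + B k l) + v l) := by
        apply Finset.sup_congr rfl; intro l _; rw [finsup_add]
    _ = Finset.univ.sup (fun k => Finset.univ.sup fun l => (A i k + B k l) + v l) :=
        Finset.sup_comm _ _ _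
    _ = Finset.univ.sup (fun k => A i k + Finset.univ.sup fun l => B k l + v l) := by
        apply Finset.sup_congr rfl; intro k _
        rw [add_finsup]
        apply Finset.sup_congr rfl; intro l _; rw [add_assoc]

lemma tpow_succ' {n : ℕ} (A : Fin n → Fin n → Trop) (t : ℕ) :
    tpow A (t+1) = tmul (tpow A t) A := by
  induction t with
  | zero => show tmul A (tId n) = tmul (tId n) A; rw [tmul_tId, tId_tmul]
  | succ t ih =>
    calc tpow A (t+1+1) = tmul A (tpow A (t+1)) := rfl
      _ = tmul A (tmul (tpow A t) A) := by rw [ih]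
      _ = tmul (tmul A (tpow A t)) A := (tmul_assoc _ _ _).symm
      _ = tmul (tpow A (t+1)) A := rfl

lemma tpow_add {n : ℕ} (A : Fin n → Fin n → Trop) (a b : ℕ) :
    tpow A (a+b) = tmul (tpow A a) (tpow A b) := by
  induction a with
  | zero => simp [tpow, tId_tmul]
  | succ a ih =>
    have h1 : a + 1 + b = (a + b) + 1 := by ring
    rw [h1]
    show tmul A (tpow A (a+b)) = tmul (tmul A (tpow A a)) (tpow A b)
    rw [ih, tmul_assoc]

lemma tmul_le_tmul {n m p : ℕ} {A A' : Fin n → Fin m → Trop} {B B' : Fin m → Fin p → Trop}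
    (hA : ∀ i j, A i j ≤ A' i j) (hB : ∀ i j, B i j ≤ B' i j) :
    ∀ i j, tmul A B i j ≤ tmul A' B' i j := by
  intro i j
  exact Finset.sup_le fun k _ => le_trans (add_le_add (hA i k) (hB k j))
    (Finset.le_sup (f := fun k => A' i k + B' k j) (Finset.mem_univ k))





lemma sub_inter {n : ℕ} {G : Set (Fin n → Trop)} : IsTropSubmodule (genBy G) := by
  constructor
  · intro x hx y hy
    intro S hS
    exact hS.1.1 x (hx S hS) y (hy S hS)
  · intro c x hx S hS
    exact hS.1.2 c x (hx S hS)

lemma subset_genBy {n : ℕ} (G : Set (Fin n → Trop)) : G ⊆ genBy G := by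
  intro x hx S hS; exact hS.2 hx

lemma genBy_min {n : ℕ} {G S : Set (Fin n → Trop)} (h1 : IsTropSubmodule S) (h2 : G ⊆ S) :
    genBy G ⊆ S := fun x hx => hx S ⟨h1, h2⟩

lemma genBy_mono {n : ℕ} {G G' : Set (Fin n → Trop)} (h : G ⊆ G') : genBy G ⊆ genBy G' :=
  genBy_min sub_inter (h.trans (subset_genBy G'))

lemma genBy_subset {n : ℕ} {G G' : Set (Fin n → Trop)} (h : G ⊆ genBy G') :
    genBy G ⊆ genBy G' := genBy_min sub_inter h

lemma finsup_mem {n : ℕ} {S : Set (Fin n → Trop)} (hS : IsTropSubmodule S)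
    {ι : Type*} (s : Finset ι) (hs : s.Nonempty) (v : ι → (Fin n → Trop))
    (hv : ∀ k ∈ s, v k ∈ S) : (fun i => s.sup fun k => v k i) ∈ S := by
  classical
  revert hv
  induction hs using Finset.Nonempty.cons_induction with
  | singleton a =>
    intro hv
    have : (fun i => ({a} : Finset ι).sup fun k => v k i) = v a := by
      funext i; simp
    rw [this]; exact hv a (by simp)
  | cons a s ha hs ih =>
    intro hv
    have h1 : (fun i => (Finset.cons a s ha).sup fun k => v k i)
        = (v a) ⊔ (fun i => s.sup fun k => v k i) := by
      funext i; simp [Finset.sup_cons]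
    rw [h1]
    exact hS.1 _ (hv a (by simp)) _ (ih (fun k hk => hv k (Finset.mem_cons_of_mem hk)))

lemma range_tvmul_sub {n m : ℕ} (A : Fin n → Fin m → Trop) :
    IsTropSubmodule (Set.range (tvmul A)) := by
  constructor
  · rintro x ⟨c, rfl⟩ y ⟨c', rfl⟩
    refine ⟨c ⊔ c', ?_⟩
    funext i
    show Finset.univ.sup (fun k => A i k + (c k ⊔ c' k)) = _
    show _ = (Finset.univ.sup fun k => A i k + c k) ⊔ (Finset.univ.sup fun k => A i k + c' k)
    rw [finsup_sup]
    apply Finset.sup_congr rfl; intro k _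
    rw [add_sup']
  · rintro d x ⟨c, rfl⟩
    refine ⟨(fun k => d + c k), ?_⟩
    funext i
    show Finset.univ.sup (fun k => A i k + (d + c k)) = d + Finset.univ.sup fun k => A i k + c k
    rw [add_finsup]
    apply Finset.sup_congr rfl; intro k _
    rw [← add_assoc, ← add_assoc, add_comm (A i k) d]

lemma col_mem_range {n m : ℕ} (A : Fin n → Fin m → Trop) (j : Fin m) :
    (fun i => A i j) ∈ Set.range (tvmul A) := by
  refine ⟨fun k => if k = j then ((0:ℝ):Trop) else ⊥, ?_⟩
  funext i
  show Finset.univ.sup (fun k => A i k + (if k = j then ((0:ℝ):Trop) else ⊥)) = A i j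
  apply le_antisymm
  · apply Finset.sup_le
    intro k _
    by_cases h : k = j
    · subst h; simp
    · simp [h, WithBot.add_bot]
  · have := Finset.le_sup (f := fun k => A i k + (if k = j then ((0:ℝ):Trop) else ⊥))
      (Finset.mem_univ j)
    simpa using this

lemma colSpace_eq_range {n m : ℕ} (hm : 0 < m) (A : Fin n → Fin m → Trop) :
    colSpace A = Set.range (tvmul A) := by
  apply le_antisymm
  · exact genBy_min (range_tvmul_sub A) (by rintro v ⟨j, rfl⟩; exact col_mem_range A j)
  · rintro x ⟨c, rfl⟩
    have : tvmul A c = fun i => Finset.univ.sup fun k => (fun kk => fun i => c kk + A i kk) k i := by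
      funext i
      apply Finset.sup_congr rfl; intro k _
      rw [add_comm]
    rw [this]
    haveI : Nonempty (Fin m) := Fin.pos_iff_nonempty.mp hm
    apply finsup_mem sub_inter _ (Finset.univ_nonempty (α := Fin m))
    intro k _
    exact sub_inter.2 (c k) _ (subset_genBy _ ⟨k, rfl⟩)


end S14
namespace S14

lemma coe_unbot (a : Trop) (h : a ≠ ⊥) : ((a.unbotD 0 : ℝ) : Trop) = a := by
  cases a with
  | none => exact absurd rfl h
  | some r => rfl

lemma add_ne_bot' {a b : Trop} (ha : a ≠ ⊥) (hb : b ≠ ⊥) : a + b ≠ ⊥ :=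
  WithBot.add_ne_bot.2 ⟨ha, hb⟩

lemma left_ne_bot {a b : Trop} (h : a + b ≠ ⊥) : a ≠ ⊥ := by
  intro ha; rw [ha, WithBot.bot_add] at h; exact h rfl

lemma right_ne_bot {a b : Trop} (h : a + b ≠ ⊥) : b ≠ ⊥ := by
  intro hb; rw [hb, WithBot.add_bot] at h; exact h rfl

lemma zero_add' (a : Trop) : ((0:ℝ):Trop) + a = a := by
  rw [WithBot.coe_zero, zero_add]

lemma add_zero' (a : Trop) : a + ((0:ℝ):Trop) = a := by
  rw [WithBot.coe_zero, add_zero]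

def transp {n m : ℕ} (A : Fin n → Fin m → Trop) : Fin m → Fin n → Trop := fun j i => A i j

lemma transp_tmul {n m p : ℕ} (A : Fin n → Fin m → Trop) (B : Fin m → Fin p → Trop) :
    transp (tmul A B) = tmul (transp B) (transp A) := by
  funext j i
  show Finset.univ.sup (fun k => A i k + B k j) = Finset.univ.sup (fun k => B k j + A i k)
  apply Finset.sup_congr rfl; intro k _; rw [add_comm]

lemma rowSpace_eq_colSpace_transp {n m : ℕ} (A : Fin n → Fin m → Trop) :
    rowSpace A = colSpace (transp A) := rfl

lemma colRank_eq_rowRank_transp {n m : ℕ} (A : Fin n → Fin m → Trop) :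
    colRank A = rowRank (transp A) := rfl

lemma vtmul_eq_tvmul_transp {n m : ℕ} (v : Fin n → Trop) (A : Fin n → Fin m → Trop) :
    vtmul v A = tvmul (transp A) v := by
  funext j
  show Finset.univ.sup (fun k => v k + A k j) = Finset.univ.sup (fun k => A k j + v k)
  apply Finset.sup_congr rfl; intro k _; rw [add_comm]

lemma rowSpace_eq_range {n m : ℕ} (hn : 0 < n) (A : Fin n → Fin m → Trop) :
    rowSpace A = Set.range (fun v => vtmul v A) := by
  have hfun : (fun v : Fin n → Trop => vtmul v A) = tvmul (transp A) :=
    funext fun v => vtmul_eq_tvmul_transp v A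
  rw [rowSpace_eq_colSpace_transp, colSpace_eq_range hn, hfun]

lemma genBy_finset_sub {n : ℕ} (G : Finset (Fin n → Trop)) :
    genBy ↑G ⊆ {x | ∃ c : (Fin n → Trop) → Trop, x = fun j => G.sup fun g => c g + g j} := by
  apply genBy_min
  · constructor
    · rintro x ⟨c, rfl⟩ y ⟨c', rfl⟩
      refine ⟨c ⊔ c', ?_⟩
      funext j
      show (G.sup fun g => c g + g j) ⊔ (G.sup fun g => c' g + g j)
          = G.sup fun g => (c g ⊔ c' g) + g j
      rw [finsup_sup]
      apply Finset.sup_congr rfl; intro g _; rw [sup_add']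
    · rintro d x ⟨c, rfl⟩
      refine ⟨fun g => d + c g, ?_⟩
      funext j
      show d + (G.sup fun g => c g + g j) = G.sup fun g => (d + c g) + g j
      rw [add_finsup]
      apply Finset.sup_congr rfl; intro g _; rw [add_assoc]
  · intro g0 hg0
    have hg0' : g0 ∈ G := hg0
    refine ⟨fun g => if g = g0 then ((0:ℝ):Trop) else ⊥, ?_⟩
    funext j
    apply le_antisymm
    · calc g0 j = (if g0 = g0 then ((0:ℝ):Trop) else ⊥) + g0 j := by
            rw [if_pos rfl, zero_add']
        _ ≤ _ := Finset.le_sup (f := fun g => (if g = g0 then ((0:ℝ):Trop) else ⊥) + g j) hg0'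
    · apply Finset.sup_le
      intro g _
      by_cases h : g = g0
      · subst h; simp
      · simp [h]

/-- Abstract rank lemma. -/
lemma rowRank_eq_n {n : ℕ} (hn : 0 < n) (F : Fin n → Fin n → Trop)
    (hidem : tmul F F = F) (hfin : ∀ i j, F i j ≠ ⊥) (hdiag : ∀ i, F i i = ((0:ℝ):Trop))
    (hprop : ∀ i k, (∀ j, F k j = F k i + F i j) → k = i) :
    rowRank F = n := by
  haveI : Nonempty (Fin n) := Fin.pos_iff_nonempty.mp hn
  have hid : ∀ k i j, F k i + F i j ≤ F k j := by
    intro k i j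
    conv_rhs => rw [← hidem]
    exact Finset.le_sup (f := fun l => F k l + F l j) (Finset.mem_univ i)
  have hrows_inj : Function.Injective (fun i => (fun j => F i j)) := by
    intro k i h
    have h' : ∀ j, F k j = F i j := fun j => congrFun h j
    apply hprop i k
    intro j
    rw [h' i, hdiag i, zero_add', h' j]
  have hsets : (↑(Finset.image (fun i => (fun j => F i j)) Finset.univ) : Set (Fin n → Trop))
      = {v | ∃ i, v = fun j => F i j} := by
    ext v
    simp only [Finset.coe_image, Finset.coe_univ, Set.image_univ, Set.mem_range,
      Set.mem_setOf_eq]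
    exact ⟨fun ⟨i, hi⟩ => ⟨i, hi.symm⟩, fun ⟨i, hi⟩ => ⟨i, hi.symm⟩⟩
  have hGen : genBy ↑(Finset.image (fun i => (fun j => F i j)) Finset.univ) = rowSpace F := by
    rw [hsets]; rfl
  have hcard : (Finset.image (fun i => (fun j => F i j)) Finset.univ).card = n := by
    rw [Finset.card_image_of_injective _ hrows_inj, Finset.card_univ, Fintype.card_fin]
  have hub : rowRank F ≤ n := Nat.sInf_le ⟨_, hcard, hGen⟩
  refine le_antisymm hub (le_csInf ⟨n, _, hcard, hGen⟩ ?_)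
  rintro b ⟨G, hGcard, hGgen⟩
  have key : ∀ i : Fin n, ∃ g ∈ G, ∃ r : ℝ, ∀ j, (r:Trop) + g j = F i j := by
    intro i
    have hmem : (fun j => F i j) ∈ genBy (↑G : Set (Fin n → Trop)) := by
      rw [hGgen]; exact subset_genBy _ ⟨i, rfl⟩
    obtain ⟨c, hc⟩ := genBy_finset_sub G hmem
    have hci : (G.sup fun g => c g + g i) = F i i := (congrFun hc i).symm
    have hGne : G.Nonempty := by
      rcases Finset.eq_empty_or_nonempty G with rfl | h
      · exfalso
        rw [Finset.sup_empty] at hci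
        exact hfin i i hci.symm
      · exact h
    obtain ⟨g0, hg0G, hg0⟩ := Finset.exists_mem_eq_sup G hGne (fun g => c g + g i)
    have e0 : c g0 + g0 i = ((0:ℝ):Trop) := by rw [← hg0, hci, hdiag i]
    have hterm : ∀ j, c g0 + g0 j ≤ F i j := by
      intro j
      rw [congrFun hc j]
      exact Finset.le_sup (f := fun g => c g + g j) hg0G
    have hg0mem : g0 ∈ rowSpace F := by
      rw [← hGgen]; exact subset_genBy _ hg0G
    rw [rowSpace_eq_range hn] at hg0mem
    obtain ⟨d, hd⟩ := hg0mem
    have hg0j : ∀ j, g0 j = Finset.univ.sup fun k => d k + F k j := fun j =>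
      (congrFun hd j).symm
    have hvj : ∀ j, c g0 + g0 j = Finset.univ.sup fun k => (c g0 + d k) + F k j := by
      intro j
      rw [hg0j j, add_finsup]
      apply Finset.sup_congr rfl; intro k _; rw [add_assoc]
    have hvi : (Finset.univ.sup fun k => (c g0 + d k) + F k i) = ((0:ℝ):Trop) := by
      rw [← hvj i, e0]
    obtain ⟨k0, _, hk0⟩ := Finset.exists_mem_eq_sup Finset.univ Finset.univ_nonempty
      (fun k => (c g0 + d k) + F k i)
    have ek0 : (c g0 + d k0) + F k0 i = ((0:ℝ):Trop) := by rw [← hk0, hvi]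
    have hwne : c g0 + d k0 ≠ ⊥ := left_ne_bot (by rw [ek0]; simp)
    obtain ⟨r', hr'⟩ : ∃ r' : ℝ, c g0 + d k0 = (r':Trop) :=
      ⟨(c g0 + d k0).unbotD 0, (coe_unbot _ hwne).symm⟩
    obtain ⟨f0, hf0⟩ : ∃ f0 : ℝ, F k0 i = (f0:Trop) :=
      ⟨(F k0 i).unbotD 0, (coe_unbot _ (hfin k0 i)).symm⟩
    have hrf : r' + f0 = 0 := by
      have h5 := ek0
      rw [hr', hf0] at h5
      exact_mod_cast h5
    have hle0 : ∀ j, (c g0 + d k0) + F k0 j ≤ F i j := by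
      intro j
      refine le_trans ?_ (hterm j)
      rw [hvj j]
      exact Finset.le_sup (f := fun k => (c g0 + d k) + F k j) (Finset.mem_univ k0)
    have heq : ∀ j, F k0 j = F k0 i + F i j := by
      intro j
      refine le_antisymm ?_ (hid k0 i j)
      have hf0r : f0 + r' = 0 := by linarith
      calc F k0 j = (f0:Trop) + ((r':Trop) + F k0 j) := by
            rw [← add_assoc, ← WithBot.coe_add, hf0r, zero_add']
        _ = (f0:Trop) + ((c g0 + d k0) + F k0 j) := by rw [← hr']
        _ ≤ (f0:Trop) + F i j := add_le_add_right (hle0 j) _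
        _ = F k0 i + F i j := by rw [hf0]
    have hk0i : k0 = i := hprop i k0 heq
    have hf00 : f0 = 0 := by
      have h6 := hf0
      rw [hk0i, hdiag i] at h6
      exact_mod_cast h6.symm
    have hr0 : r' = 0 := by linarith
    have hveq : ∀ j, c g0 + g0 j = F i j := by
      intro j
      refine le_antisymm (hterm j) ?_
      have h1 : (c g0 + d k0) + F k0 j ≤ c g0 + g0 j := by
        rw [hvj j]
        exact Finset.le_sup (f := fun k => (c g0 + d k) + F k j) (Finset.mem_univ k0)
      rw [hr', hr0, hk0i, zero_add'] at h1
      exact h1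
    have hcne : c g0 ≠ ⊥ := left_ne_bot (by rw [e0]; simp)
    obtain ⟨r, hr⟩ : ∃ r : ℝ, c g0 = (r:Trop) := ⟨(c g0).unbotD 0, (coe_unbot _ hcne).symm⟩
    exact ⟨g0, hg0G, r, fun j => by rw [← hr, hveq j]⟩
  choose gfun hgmem rfun hr using key
  have hinj : Function.Injective gfun := by
    intro i i' h
    apply hprop i' i
    intro j
    have h3 : ∀ j, F i j = ((rfun i - rfun i' : ℝ):Trop) + F i' j := by
      intro j
      rw [← hr i j, ← hr i' j, h, ← add_assoc, ← WithBot.coe_add]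
      congr 2
      ring
    have h4 : F i i' = ((rfun i - rfun i' : ℝ):Trop) := by
      rw [h3 i', hdiag i', add_zero']
    rw [h3 j, ← h4]
  have hcount : (Finset.univ : Finset (Fin n)).card ≤ G.card :=
    Finset.card_le_card_of_injOn gfun (fun i _ => hgmem i) (Function.Injective.injOn hinj)
  rw [Finset.card_univ, Fintype.card_fin] at hcount
  rw [← hGcard]
  exact hcount

end S14
namespace S14

lemma tpow_one {n : ℕ} (A : Fin n → Fin n → Trop) : tpow A 1 = A := by
  show tmul A (tId n) = A
  exact tmul_tId A

lemma rowRank_lt_of_redundant {n m : ℕ} (A : Fin n → Fin m → Trop) (i : Fin n)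
    (h : (fun j => A i j) ∈ genBy {v | ∃ k, k ≠ i ∧ v = fun j => A k j}) :
    rowRank A < n := by
  classical
  set S : Set (Fin m → Trop) := {v | ∃ k, k ≠ i ∧ v = fun j => A k j} with hS
  set G : Finset (Fin m → Trop) :=
    Finset.image (fun k => (fun j : Fin m => A k j)) (Finset.univ.erase i) with hG
  have hGS : (↑G : Set (Fin m → Trop)) = S := by
    ext v
    simp only [hG, Finset.coe_image, Set.mem_image, Finset.mem_coe, Finset.mem_erase,
      Finset.mem_univ, and_true, hS, Set.mem_setOf_eq]
    exact ⟨fun ⟨k, hk, hv⟩ => ⟨k, hk, hv.symm⟩, fun ⟨k, hk, hv⟩ => ⟨k, hk, hv.symm⟩⟩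
  have hGen : genBy ↑G = rowSpace A := by
    rw [hGS]
    apply Set.Subset.antisymm
    · exact genBy_mono (fun v ⟨k, _, hv⟩ => ⟨k, hv⟩)
    · apply genBy_subset
      rintro v ⟨k, rfl⟩
      by_cases hk : k = i
      · subst hk; exact h
      · exact subset_genBy S ⟨k, hk, rfl⟩
  have hcard : G.card < n := by
    calc G.card ≤ (Finset.univ.erase i).card := Finset.card_image_le
      _ = n - 1 := by rw [Finset.card_erase_of_mem (Finset.mem_univ i), Finset.card_univ,
            Fintype.card_fin]
      _ < n := Nat.sub_lt i.pos Nat.one_pos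
  exact lt_of_le_of_lt (Nat.sInf_le ⟨G, rfl, hGen⟩) hcard

lemma rowRank_lt_of_prop {n m : ℕ} (A : Fin n → Fin m → Trop) (i k : Fin n) (hik : k ≠ i)
    (lam : Trop) (h : ∀ j, A i j = lam + A k j) : rowRank A < n := by
  apply rowRank_lt_of_redundant A i
  have hrowk : (fun j => A k j) ∈ genBy {v | ∃ k', k' ≠ i ∧ v = fun j => A k' j} :=
    subset_genBy _ ⟨k, hik, rfl⟩
  have := sub_inter.2 lam _ hrowk
  have heq : (fun j => lam + A k j) = fun j => A i j := by
    funext j; rw [← h j]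
  rwa [heq] at this

lemma univ_eq_singleton {n : ℕ} (i : Fin n) (hall : ∀ k : Fin n, k = i) :
    (Finset.univ : Finset (Fin n)) = {i} := by
  ext k
  simp [hall k]

lemma tpow_const {n : ℕ} (i : Fin n) (hall : ∀ k : Fin n, k = i) (M : ℝ)
    (A : Fin n → Fin n → Trop) (hA : A i i = ((M:ℝ):Trop)) :
    ∀ t : ℕ, tpow A (t+1) i i = (((t+1 : ℕ) * M : ℝ) : Trop) := by
  intro t
  induction t with
  | zero => rw [tpow_one, hA]; norm_num
  | succ t ih =>
    show (tmul A (tpow A (t+1))) i i = _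
    show (Finset.univ.sup fun k => A i k + tpow A (t+1) k i) = _
    rw [univ_eq_singleton i hall, Finset.sup_singleton, hA, ih, ← WithBot.coe_add]
    congr 1
    push_cast
    ring

/-- The diagonal of a full rank idempotent is zero. -/
lemma diag_zero {n : ℕ} (E : Fin n → Fin n → Trop) (hidem : tmul E E = E)
    (hfull : rowRank E = n) (M : ℝ) (hM : M < 0)
    (hF1 : ∃ t, 1 ≤ t ∧ ∃ F1 : Fin n → Fin n → Trop,
      F1 = tpow (fun i j => if E i j = ⊥ then ((M:ℝ):Trop) else E i j) t ∧
      tmul F1 F1 = F1) :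
    ∀ i, E i i = ((0:ℝ):Trop) := by
  intro i
  by_contra hne
  -- idempotency diagonal term
  have hterm : ∀ k i' j, E i' k + E k j ≤ E i' j := by
    intro k i' j
    conv_rhs => rw [← hidem]
    exact Finset.le_sup (f := fun l => E i' l + E l j) (Finset.mem_univ k)
  by_cases hall : ∀ k : Fin n, k = i
  · -- n = 1 essentially
    by_cases hrow : E i i = ⊥
    · -- the matrix is all ⊥; use hF1 to derive a contradiction
      obtain ⟨t, ht, F1, hF1eq, hF1idem⟩ := hF1
      set A : Fin n → Fin n → Trop := fun i' j => if E i' j = ⊥ then ((M:ℝ):Trop) else E i' j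
        with hA
      have hAii : A i i = ((M:ℝ):Trop) := by simp [hA, hrow]
      obtain ⟨s, rfl⟩ : ∃ s, t = s + 1 := ⟨t - 1, (Nat.succ_pred_eq_of_pos ht).symm⟩
      have h1 : F1 i i = (((s+1 : ℕ) * M : ℝ) : Trop) := by
        rw [hF1eq]; exact tpow_const i hall M A hAii s
      have h2 : tmul F1 F1 i i = F1 i i := by rw [hF1idem]
      have h3 : tmul F1 F1 i i = F1 i i + F1 i i := by
        show (Finset.univ.sup fun k => F1 i k + F1 k i) = _
        rw [univ_eq_singleton i hall, Finset.sup_singleton]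
      rw [h3, h1, ← WithBot.coe_add] at h2
      have h4 : ((s+1:ℕ) * M : ℝ) + ((s+1:ℕ) * M : ℝ) = ((s+1:ℕ) * M : ℝ) := by
        exact_mod_cast h2
      have h5 : ((s+1:ℕ) * M : ℝ) = 0 := by linarith
      have h6 : ((s+1:ℕ):ℝ) > 0 := by positivity
      nlinarith
    · -- E i i = r with r + r ≤ r and r ≠ 0 : direct contradiction
      obtain ⟨r, hr⟩ : ∃ r : ℝ, E i i = (r:Trop) := ⟨(E i i).unbotD 0, (coe_unbot _ hrow).symm⟩
      have h1 : E i i + E i i ≤ E i i := hterm i i i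
      rw [hr, ← WithBot.coe_add] at h1
      have h2 : r + r ≤ r := by exact_mod_cast h1
      -- also E i i = sup over {i} of (E i i + E i i) : equality
      have h3 : E i i = E i i + E i i := by
        conv_lhs => rw [← hidem]
        show (Finset.univ.sup fun k => E i k + E k i) = _
        rw [univ_eq_singleton i hall, Finset.sup_singleton]
      rw [hr, ← WithBot.coe_add] at h3
      have h4 : r = r + r := by exact_mod_cast h3
      have h5 : r = 0 := by linarith
      apply hne
      rw [hr, h5]
  · -- there exists k ≠ i
    push_neg at hall
    obtain ⟨k1, hk1⟩ := hall
    -- E i i ≤ 0 (or ⊥)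
    have hred : (fun j => E i j) ∈ genBy {v | ∃ k, k ≠ i ∧ v = fun j => E k j} := by
      have hexp : (fun j => E i j) =
          fun j => (Finset.univ.erase i).sup fun k => E i k + E k j := by
        funext j
        have hsup : E i j = Finset.univ.sup fun k => E i k + E k j :=
          (congrFun (congrFun hidem i) j).symm
        have hsplit : (Finset.univ.sup fun k => E i k + E k j)
            = (E i i + E i j) ⊔ ((Finset.univ.erase i).sup fun k => E i k + E k j) := by
          conv_lhs => rw [← Finset.insert_erase (Finset.mem_univ i)]
          rw [Finset.sup_insert]
        set s := (Finset.univ.erase i).sup fun k => E i k + E k j with hs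
        by_cases hb : E i i = ⊥
        · rw [hsup, hsplit, hb, WithBot.bot_add, bot_sup_eq]
        · obtain ⟨r, hr⟩ : ∃ r : ℝ, E i i = (r:Trop) := ⟨(E i i).unbotD 0, (coe_unbot _ hb).symm⟩
          have hr0 : r ≤ 0 := by
            have h1 := hterm i i i
            rw [hr, ← WithBot.coe_add] at h1
            have : r + r ≤ r := by exact_mod_cast h1
            linarith
          have hrneg : r < 0 := by
            rcases lt_or_eq_of_le hr0 with h | h
            · exact h
            · exact absurd (by rw [hr, h] : E i i = ((0:ℝ):Trop)) hne
          by_cases hj : E i j = ⊥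
          · have : s ≤ ⊥ := by
              rw [hj] at hsup
              rw [hsplit] at hsup
              exact le_sup_right.trans hsup.symm.le
            rw [hj, le_bot_iff.1 this]
          · obtain ⟨e, he⟩ : ∃ e : ℝ, E i j = (e:Trop) :=
              ⟨(E i j).unbotD 0, (coe_unbot _ hj).symm⟩
            have hlt : E i i + E i j < E i j := by
              rw [hr, he, ← WithBot.coe_add]
              exact_mod_cast (by linarith : r + e < e)
            rcases le_total (E i i + E i j) s with h | h
            · rw [hsup, hsplit, sup_eq_right.2 h]
            · exfalso
              have hEij : E i j = E i i + E i j := by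
                conv_lhs => rw [hsup, hsplit]
                exact sup_eq_left.2 h
              have hlt' := hlt
              rw [← hEij] at hlt'
              exact lt_irrefl _ hlt'
      rw [hexp]
      apply finsup_mem sub_inter
      · exact ⟨k1, Finset.mem_erase.2 ⟨hk1, Finset.mem_univ k1⟩⟩
      · intro k hk
        exact sub_inter.2 (E i k) _
          (subset_genBy _ ⟨k, (Finset.mem_erase.1 hk).1, rfl⟩)
    exact absurd hfull (Nat.ne_of_lt (rowRank_lt_of_redundant E i hred))

lemma E_rows_nonprop {n : ℕ} (E : Fin n → Fin n → Trop) (hfull : rowRank E = n)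
    {i k : Fin n} (hik : k ≠ i) (lam : Trop) (h : ∀ j, E k j = lam + E i j) : False :=
  absurd hfull (Nat.ne_of_lt (rowRank_lt_of_prop E k i (Ne.symm hik) lam h))

end S14
namespace S14

/-- The sum of absolute values of the finite entries. -/
def Sig {n : ℕ} (E : Fin n → Fin n → Trop) : ℝ := ∑ i, ∑ j, |(E i j).unbotD 0|

lemma Sig_eq_sum_prod {n : ℕ} (E : Fin n → Fin n → Trop) :
    Sig E = ∑ p ∈ Finset.univ ×ˢ Finset.univ, |(E p.1 p.2).unbotD 0| := by
  rw [Finset.sum_product]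
  rfl

lemma Sig_nonneg {n : ℕ} (E : Fin n → Fin n → Trop) : 0 ≤ Sig E := by
  apply Finset.sum_nonneg
  intro i _
  apply Finset.sum_nonneg
  intro j _
  exact abs_nonneg _

lemma abs_le_Sig {n : ℕ} (E : Fin n → Fin n → Trop) (p : Fin n × Fin n) :
    |(E p.1 p.2).unbotD 0| ≤ Sig E := by
  rw [Sig_eq_sum_prod]
  exact Finset.single_le_sum (f := fun q : Fin n × Fin n => |(E q.1 q.2).unbotD 0|)
    (fun q _ => abs_nonneg _) (by simp)

lemma pair_le_Sig {n : ℕ} (E : Fin n → Fin n → Trop) {p q : Fin n × Fin n} (hpq : p ≠ q) :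
    |(E p.1 p.2).unbotD 0| + |(E q.1 q.2).unbotD 0| ≤ Sig E := by
  rw [Sig_eq_sum_prod]
  have hsub : {p, q} ⊆ Finset.univ ×ˢ Finset.univ := by
    intro z _; simp
  have := Finset.sum_le_sum_of_subset_of_nonneg hsub
    (fun z _ _ => abs_nonneg ((E z.1 z.2).unbotD 0))
  rwa [Finset.sum_insert (by simp [hpq]), Finset.sum_singleton] at this

lemma triple_le_Sig {n : ℕ} (E : Fin n → Fin n → Trop) {p q r : Fin n × Fin n}
    (hpq : p ≠ q) (hpr : p ≠ r) (hqr : q ≠ r) :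
    |(E p.1 p.2).unbotD 0| + |(E q.1 q.2).unbotD 0| + |(E r.1 r.2).unbotD 0| ≤ Sig E := by
  rw [Sig_eq_sum_prod]
  have hsub : {p, q, r} ⊆ Finset.univ ×ˢ Finset.univ := by
    intro z _; simp
  have := Finset.sum_le_sum_of_subset_of_nonneg hsub
    (fun z _ _ => abs_nonneg ((E z.1 z.2).unbotD 0))
  rwa [Finset.sum_insert (by simp [hpq, hpr]), Finset.sum_insert (by simp [hqr]),
    Finset.sum_singleton, ← add_assoc] at this

lemma unbot_of_coe (r : ℝ) : ((r : Trop)).unbotD 0 = r := rfl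

lemma row_sup_spec {n : ℕ} (E : Fin n → Fin n → Trop) (hdiag : ∀ i, E i i = ((0:ℝ):Trop))
    (i : Fin n) :
    ∃ u : Fin n, ∃ ru : ℝ, (Finset.univ.sup fun t => E i t) = (ru:Trop) ∧ E i u = (ru:Trop) ∧
      0 ≤ ru ∧ ru ≤ Sig E := by
  haveI : Nonempty (Fin n) := ⟨i⟩
  obtain ⟨u, _, hu⟩ := Finset.exists_mem_eq_sup Finset.univ Finset.univ_nonempty
    (fun t => E i t)
  have hge : ((0:ℝ):Trop) ≤ Finset.univ.sup fun t => E i t := by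
    rw [← hdiag i]
    exact Finset.le_sup (f := fun t => E i t) (Finset.mem_univ i)
  have hne : E i u ≠ ⊥ := by
    intro hb
    rw [hu, hb] at hge
    exact absurd (le_bot_iff.1 hge) (by simp)
  obtain ⟨ru, hru⟩ : ∃ ru : ℝ, E i u = (ru:Trop) := ⟨(E i u).unbotD 0, (coe_unbot _ hne).symm⟩
  refine ⟨u, ru, by rw [hu, hru], hru, ?_, ?_⟩
  · have := hge
    rw [hu, hru] at this
    exact_mod_cast this
  · have h1 : |(E i u).unbotD 0| ≤ Sig E := abs_le_Sig E (i, u)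
    rw [hru, unbot_of_coe] at h1
    exact le_trans (le_abs_self ru) h1

lemma col_sup_spec {n : ℕ} (E : Fin n → Fin n → Trop) (hdiag : ∀ i, E i i = ((0:ℝ):Trop))
    (j : Fin n) :
    ∃ s : Fin n, ∃ rs : ℝ, (Finset.univ.sup fun s => E s j) = (rs:Trop) ∧ E s j = (rs:Trop) ∧
      0 ≤ rs ∧ rs ≤ Sig E := by
  haveI : Nonempty (Fin n) := ⟨j⟩
  obtain ⟨s, _, hs⟩ := Finset.exists_mem_eq_sup Finset.univ Finset.univ_nonempty
    (fun s => E s j)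
  have hge : ((0:ℝ):Trop) ≤ Finset.univ.sup fun s => E s j := by
    rw [← hdiag j]
    exact Finset.le_sup (f := fun s => E s j) (Finset.mem_univ j)
  have hne : E s j ≠ ⊥ := by
    intro hb
    rw [hs, hb] at hge
    exact absurd (le_bot_iff.1 hge) (by simp)
  obtain ⟨rs, hrs⟩ : ∃ rs : ℝ, E s j = (rs:Trop) := ⟨(E s j).unbotD 0, (coe_unbot _ hne).symm⟩
  refine ⟨s, rs, by rw [hs, hrs], hrs, ?_, ?_⟩
  · have := hge
    rw [hs, hrs] at this
    exact_mod_cast this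
  · have h1 : |(E s j).unbotD 0| ≤ Sig E := abs_le_Sig E (s, j)
    rw [hrs, unbot_of_coe] at h1
    exact le_trans (le_abs_self rs) h1

/-- Key inequality (★). -/
lemma star {n : ℕ} (E : Fin n → Fin n → Trop) (hdiag : ∀ i, E i i = ((0:ℝ):Trop))
    (c : ℝ) (hc : c ≤ -(Sig E)) {i j : Fin n} (hij : E i j ≠ ⊥) :
    (Finset.univ.sup fun t => E i t) + (c:Trop) + (Finset.univ.sup fun s => E s j) ≤ E i j := by
  obtain ⟨u, ru, hRu, hEu, hru0, hruS⟩ := row_sup_spec E hdiag i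
  obtain ⟨s, rs, hCs, hEs, hrs0, hrsS⟩ := col_sup_spec E hdiag j
  obtain ⟨e, he⟩ : ∃ e : ℝ, E i j = (e:Trop) := ⟨(E i j).unbotD 0, (coe_unbot _ hij).symm⟩
  rw [hRu, hCs, he, ← WithBot.coe_add, ← WithBot.coe_add, WithBot.coe_le_coe]
  have key : ru + rs ≤ Sig E + e := by
    by_cases h1 : u = j
    · have hre : ru = e := by
        rw [h1] at hEu
        rw [hEu] at he
        exact_mod_cast he
      linarith
    · by_cases h2 : s = i
      · have hre : rs = e := by
          rw [h2] at hEs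
          rw [hEs] at he
          exact_mod_cast he
        linarith
      · have htr := triple_le_Sig E (p := (i,u)) (q := (s,j)) (r := (i,j))
          (by simp; intro hsi; exact absurd hsi.symm h2)
          (by simp [h1]) (by simp [h2])
        rw [hEu, hEs, he, unbot_of_coe, unbot_of_coe, unbot_of_coe] at htr
        have h3 : ru ≤ |ru| := le_abs_self ru
        have h4 : rs ≤ |rs| := le_abs_self rs
        have h5 : -e ≤ |e| := neg_le_abs e
        linarith
  linarith

section Formula
variable {n : ℕ}

/-- The perturbed matrix. -/
noncomputable def Amat (E : Fin n → Fin n → Trop) (c : ℝ) : Fin n → Fin n → Trop :=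
  fun i j => if E i j = ⊥ then ((c:ℝ):Trop) else E i j

/-- The claimed idempotent power. -/
noncomputable def Gmat (E : Fin n → Fin n → Trop) (c : ℝ) : Fin n → Fin n → Trop :=
  fun i j => if E i j = ⊥ then
      (Finset.univ.sup fun t => E i t) + ((c:ℝ):Trop) + (Finset.univ.sup fun s => E s j)
    else E i j

variable (E : Fin n → Fin n → Trop) (c : ℝ)

lemma A_ne_bot (i j : Fin n) : Amat E c i j ≠ ⊥ := by
  unfold Amat
  by_cases h : E i j = ⊥ <;> simp [h]

lemma A_diag (hdiag : ∀ i, E i i = ((0:ℝ):Trop)) (i : Fin n) :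
    Amat E c i i = ((0:ℝ):Trop) := by
  unfold Amat
  rw [if_neg (by rw [hdiag i]; simp), hdiag i]

lemma E_le_A (i j : Fin n) : E i j ≤ Amat E c i j := by
  unfold Amat
  by_cases h : E i j = ⊥
  · rw [h]; exact bot_le
  · rw [if_neg h]

lemma tId_le_A (hdiag : ∀ i, E i i = ((0:ℝ):Trop)) (i j : Fin n) :
    tId n i j ≤ Amat E c i j := by
  unfold tId
  by_cases h : i = j
  · subst h; rw [if_pos rfl, A_diag E c hdiag]
  · rw [if_neg h]; exact bot_le

lemma G_ne_bot (hdiag : ∀ i, E i i = ((0:ℝ):Trop)) (i j : Fin n) : Gmat E c i j ≠ ⊥ := by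
  unfold Gmat
  by_cases h : E i j = ⊥
  · rw [if_pos h]
    obtain ⟨u, ru, hRu, _⟩ := row_sup_spec E hdiag i
    obtain ⟨s, rs, hCs, _⟩ := col_sup_spec E hdiag j
    rw [hRu, hCs, ← WithBot.coe_add, ← WithBot.coe_add]
    simp
  · rw [if_neg h]; exact h

lemma E_le_G (i j : Fin n) : E i j ≤ Gmat E c i j := by
  unfold Gmat
  by_cases h : E i j = ⊥
  · rw [h]; exact bot_le
  · rw [if_neg h]

lemma RC_le_G (hdiag : ∀ i, E i i = ((0:ℝ):Trop)) (hc : c ≤ -(Sig E)) (i j : Fin n) :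
    (Finset.univ.sup fun t => E i t) + ((c:ℝ):Trop) + (Finset.univ.sup fun s => E s j)
      ≤ Gmat E c i j := by
  unfold Gmat
  by_cases h : E i j = ⊥
  · rw [if_pos h]
  · rw [if_neg h]
    exact star E hdiag c hc h

lemma row_absorb (hidem : tmul E E = E) (hdiag : ∀ i, E i i = ((0:ℝ):Trop))
    {i k : Fin n} (h : E i k ≠ ⊥) :
    E i k + (Finset.univ.sup fun t => E k t) ≤ Finset.univ.sup fun t => E i t := by
  obtain ⟨u, ru, hRu, hEu, _, _⟩ := row_sup_spec E hdiag k
  rw [hRu, ← hEu]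
  calc E i k + E k u ≤ E i u := by
        conv_rhs => rw [← hidem]
        exact Finset.le_sup (f := fun l => E i l + E l u) (Finset.mem_univ k)
    _ ≤ _ := Finset.le_sup (f := fun t => E i t) (Finset.mem_univ u)

lemma col_absorb (hidem : tmul E E = E) (hdiag : ∀ i, E i i = ((0:ℝ):Trop))
    {k j : Fin n} (h : E k j ≠ ⊥) :
    (Finset.univ.sup fun s => E s k) + E k j ≤ Finset.univ.sup fun s => E s j := by
  obtain ⟨s, rs, hCs, hEs, _, _⟩ := col_sup_spec E hdiag k
  rw [hCs, ← hEs]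
  calc E s k + E k j ≤ E s j := by
        conv_rhs => rw [← hidem]
        exact Finset.le_sup (f := fun l => E s l + E l j) (Finset.mem_univ k)
    _ ≤ _ := Finset.le_sup (f := fun s => E s j) (Finset.mem_univ s)

lemma c_le_RC (hdiag : ∀ i, E i i = ((0:ℝ):Trop)) (i j : Fin n) :
    ((c:ℝ):Trop) ≤
      (Finset.univ.sup fun t => E i t) + ((c:ℝ):Trop) + (Finset.univ.sup fun s => E s j) := by
  obtain ⟨u, ru, hRu, _, hru0, _⟩ := row_sup_spec E hdiag i
  obtain ⟨s, rs, hCs, _, hrs0, _⟩ := col_sup_spec E hdiag j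
  rw [hRu, hCs, ← WithBot.coe_add, ← WithBot.coe_add, WithBot.coe_le_coe]
  linarith

lemma A_le_G (hdiag : ∀ i, E i i = ((0:ℝ):Trop)) (i j : Fin n) :
    Amat E c i j ≤ Gmat E c i j := by
  by_cases h : E i j = ⊥
  · show (if E i j = ⊥ then ((c:ℝ):Trop) else E i j) ≤ _
    rw [if_pos h]
    refine le_trans (c_le_RC E c hdiag i j) ?_
    unfold Gmat
    rw [if_pos h]
  · show (if E i j = ⊥ then ((c:ℝ):Trop) else E i j) ≤ Gmat E c i j
    rw [if_neg h]
    exact E_le_G E c i j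

/-- The crucial stability: `A ⊗ G ≤ G`. -/
lemma AG_le (hidem : tmul E E = E) (hdiag : ∀ i, E i i = ((0:ℝ):Trop))
    (hc : c ≤ -(Sig E)) (i k j : Fin n) :
    Amat E c i k + Gmat E c k j ≤ Gmat E c i j := by
  by_cases h1 : E i k = ⊥ <;> by_cases h2 : E k j = ⊥
  · -- both bot : c + (Rk + c + Cj) ≤ G i j
    have hA : Amat E c i k = ((c:ℝ):Trop) := by unfold Amat; rw [if_pos h1]
    have hG : Gmat E c k j =
        (Finset.univ.sup fun t => E k t) + ((c:ℝ):Trop) + (Finset.univ.sup fun s => E s j) := by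
      unfold Gmat; rw [if_pos h2]
    rw [hA, hG]
    obtain ⟨u, ru, hRk, _, hru0, hruS⟩ := row_sup_spec E hdiag k
    obtain ⟨s, rs, hCj, _, hrs0, hrsS⟩ := col_sup_spec E hdiag j
    obtain ⟨u', ru', hRi, _, hru'0, _⟩ := row_sup_spec E hdiag i
    refine le_trans ?_ (RC_le_G E c hdiag hc i j)
    rw [hRk, hCj, hRi, ← WithBot.coe_add, ← WithBot.coe_add, ← WithBot.coe_add,
      ← WithBot.coe_add, ← WithBot.coe_add, WithBot.coe_le_coe]
    have hSnn := Sig_nonneg E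
    nlinarith [hruS, hru0, hru'0]
  · -- E i k bot, E k j finite : c + E k j ≤ G i j
    have hA : Amat E c i k = ((c:ℝ):Trop) := by unfold Amat; rw [if_pos h1]
    have hG : Gmat E c k j = E k j := by unfold Gmat; rw [if_neg h2]
    rw [hA, hG]
    obtain ⟨u', ru', hRi, _, hru'0, _⟩ := row_sup_spec E hdiag i
    obtain ⟨e, he⟩ : ∃ e : ℝ, E k j = (e:Trop) := ⟨_, (coe_unbot _ h2).symm⟩
    refine le_trans ?_ (RC_le_G E c hdiag hc i j)
    have hCle : E k j ≤ Finset.univ.sup fun s => E s j :=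
      Finset.le_sup (f := fun s => E s j) (Finset.mem_univ k)
    obtain ⟨s, rs, hCj, _, hrs0, _⟩ := col_sup_spec E hdiag j
    rw [he, hRi, hCj, ← WithBot.coe_add, ← WithBot.coe_add, ← WithBot.coe_add,
      WithBot.coe_le_coe]
    have : e ≤ rs := by
      rw [he, hCj] at hCle
      exact_mod_cast hCle
    linarith
  · -- E i k finite, E k j bot : E i k + (Rk + c + Cj) ≤ G i j
    have hA : Amat E c i k = E i k := by unfold Amat; rw [if_neg h1]
    have hG : Gmat E c k j =
        (Finset.univ.sup fun t => E k t) + ((c:ℝ):Trop) + (Finset.univ.sup fun s => E s j) := by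
      unfold Gmat; rw [if_pos h2]
    rw [hA, hG]
    refine le_trans ?_ (RC_le_G E c hdiag hc i j)
    have habs := row_absorb E hidem hdiag h1
    calc E i k + ((Finset.univ.sup fun t => E k t) + ((c:ℝ):Trop)
            + (Finset.univ.sup fun s => E s j))
        = (E i k + (Finset.univ.sup fun t => E k t)) + ((c:ℝ):Trop)
            + (Finset.univ.sup fun s => E s j) := by
          rw [← add_assoc, ← add_assoc]
      _ ≤ _ := by
          apply add_le_add_left
          apply add_le_add_left
          exact habs
  · -- both finite
    have hA : Amat E c i k = E i k := by unfold Amat; rw [if_neg h1]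
    have hG : Gmat E c k j = E k j := by unfold Gmat; rw [if_neg h2]
    rw [hA, hG]
    refine le_trans ?_ (E_le_G E c i j)
    conv_rhs => rw [← hidem]
    exact Finset.le_sup (f := fun l => E i l + E l j) (Finset.mem_univ k)

lemma tpow_A_le_G (hidem : tmul E E = E) (hdiag : ∀ i, E i i = ((0:ℝ):Trop))
    (hc : c ≤ -(Sig E)) :
    ∀ t, 1 ≤ t → ∀ i j, tpow (Amat E c) t i j ≤ Gmat E c i j := by
  intro t ht
  induction t, ht using Nat.le_induction with
  | base =>
    intro i j
    rw [tpow_one]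
    exact A_le_G E c hdiag i j
  | succ t ht ih =>
    intro i j
    show (Finset.univ.sup fun k => Amat E c i k + tpow (Amat E c) t k j) ≤ _
    apply Finset.sup_le
    intro k _
    exact le_trans (add_le_add_right (ih k j) _) (AG_le E c hidem hdiag hc i k j)

end Formula

end S14
namespace S14

lemma tpow_le_succ {n : ℕ} {A : Fin n → Fin n → Trop} (hA : ∀ i j, tId n i j ≤ A i j) (s : ℕ) :
    ∀ i j, tpow A s i j ≤ tpow A (s+1) i j := by
  intro i j
  have h1 : tpow A s i j = tmul (tId n) (tpow A s) i j := by rw [tId_tmul]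
  rw [h1]
  exact tmul_le_tmul hA (fun i' j' => le_refl _) i j

lemma tpow_mono {n : ℕ} {A : Fin n → Fin n → Trop} (hA : ∀ i j, tId n i j ≤ A i j)
    {a b : ℕ} (hab : a ≤ b) : ∀ i j, tpow A a i j ≤ tpow A b i j := by
  induction b, hab using Nat.le_induction with
  | base => exact fun i j => le_refl _
  | succ b hb ih => exact fun i j => le_trans (ih i j) (tpow_le_succ hA b i j)

lemma tpow_stable {n : ℕ} {A : Fin n → Fin n → Trop} (hA : ∀ i j, tId n i j ≤ A i j)
    {t : ℕ} (ht : 1 ≤ t) (hid : tmul (tpow A t) (tpow A t) = tpow A t) :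
    ∀ s, t ≤ s → tpow A s = tpow A t := by
  have h2t : tpow A (t + t) = tpow A t := by rw [tpow_add]; exact hid
  have hstep : tpow A (t+1) = tpow A t := by
    funext i j
    apply le_antisymm
    · have h1 : tpow A (t+1) i j ≤ tpow A (t+t) i j := tpow_mono hA (by omega) i j
      rwa [h2t] at h1
    · exact tpow_le_succ hA t i j
  intro s hs
  induction s, hs using Nat.le_induction with
  | base => rfl
  | succ s hs ih =>
    show tmul A (tpow A s) = tpow A t
    rw [ih]
    exact hstep

lemma tpow_E_eq {n : ℕ} (E : Fin n → Fin n → Trop) (hidem : tmul E E = E) :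
    ∀ t, 1 ≤ t → tpow E t = E := by
  intro t ht
  induction t, ht using Nat.le_induction with
  | base => exact tpow_one E
  | succ t ht ih =>
    show tmul E (tpow E t) = E
    rw [ih]
    exact hidem

lemma tpow_le_of_le {n : ℕ} {A B : Fin n → Fin n → Trop} (h : ∀ i j, A i j ≤ B i j) (t : ℕ) :
    ∀ i j, tpow A t i j ≤ tpow B t i j := by
  induction t with
  | zero => exact fun i j => le_refl _
  | succ t ih => exact tmul_le_tmul h ih

section Formula2
variable {n : ℕ} (E : Fin n → Fin n → Trop) (c : ℝ)

lemma G_le_F (hidem : tmul E E = E) (hdiag : ∀ i, E i i = ((0:ℝ):Trop))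
    (hc : c ≤ -(Sig E)) (Fm : Fin n → Fin n → Trop) (t : ℕ) (ht : 1 ≤ t)
    (hFm : Fm = tpow (Amat E c) t) (hFidem : tmul Fm Fm = Fm) :
    ∀ i j, Gmat E c i j ≤ Fm i j := by
  intro i j
  set A := Amat E c with hA
  have hIA : ∀ i j, tId n i j ≤ A i j := tId_le_A E c hdiag
  have hidA : tmul (tpow A t) (tpow A t) = tpow A t := by
    rw [← hFm]; exact hFidem
  have hstable := tpow_stable hIA ht hidA
  by_cases hb : E i j = ⊥
  · -- lower bound via explicit path of length t+3
    have hF3 : Fm = tpow A (t+3) := by rw [hFm, hstable (t+3) (by omega)]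
    obtain ⟨u, ru, hRi, hEu, hru0, _⟩ := row_sup_spec E hdiag i
    obtain ⟨s, rs, hCj, hEs, hrs0, _⟩ := col_sup_spec E hdiag j
    have hAiu : A i u = (ru:Trop) := by
      rw [hA]; unfold Amat; rw [if_neg (by rw [hEu]; simp), hEu]
    have hAsj : A s j = (rs:Trop) := by
      rw [hA]; unfold Amat; rw [if_neg (by rw [hEs]; simp), hEs]
    have hAus : ((c:ℝ):Trop) ≤ A u s := by
      rw [hA]; unfold Amat
      by_cases h : E u s = ⊥
      · rw [if_pos h]
      · rw [if_neg h]
        obtain ⟨e, he⟩ : ∃ e : ℝ, E u s = (e:Trop) := ⟨_, (coe_unbot _ h).symm⟩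
        rw [he, WithBot.coe_le_coe]
        have h1 : |(E u s).unbotD 0| ≤ Sig E := abs_le_Sig E (u, s)
        rw [he, unbot_of_coe] at h1
        have := neg_abs_le e
        linarith
    have hdiagt : ((0:ℝ):Trop) ≤ tpow A t i i := by
      have h1 : tId n i i ≤ tpow A t i i := by
        have := tpow_mono hIA (Nat.zero_le t) i i
        exact le_trans (le_of_eq (by rfl)) this
      rwa [tId, if_pos rfl] at h1
    -- tpow A 3 i j ≥ A i u + (A u s + A s j)
    have h3 : A i u + (A u s + A s j) ≤ tpow A 3 i j := by
      have e1 : A s j = tpow A 1 s j := by rw [tpow_one]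
      have e2 : A u s + tpow A 1 s j ≤ tpow A 2 u j := by
        show _ ≤ Finset.univ.sup fun k => A u k + tpow A 1 k j
        exact Finset.le_sup (f := fun k => A u k + tpow A 1 k j) (Finset.mem_univ s)
      have e3 : A i u + tpow A 2 u j ≤ tpow A 3 i j := by
        show _ ≤ Finset.univ.sup fun k => A i k + tpow A 2 k j
        exact Finset.le_sup (f := fun k => A i k + tpow A 2 k j) (Finset.mem_univ u)
      calc A i u + (A u s + A s j) = A i u + (A u s + tpow A 1 s j) := by rw [← e1]
        _ ≤ A i u + tpow A 2 u j := add_le_add_right e2 _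
        _ ≤ tpow A 3 i j := e3
    have h4 : tpow A t i i + tpow A 3 i j ≤ tpow A (t+3) i j := by
      rw [tpow_add]
      exact Finset.le_sup (f := fun k => tpow A t i k + tpow A 3 k j) (Finset.mem_univ i)
    have h5 : ((0:ℝ):Trop) + (A i u + (A u s + A s j)) ≤ tpow A (t+3) i j := by
      refine le_trans ?_ h4
      exact add_le_add hdiagt h3
    have h6 : Gmat E c i j ≤ ((0:ℝ):Trop) + (A i u + (A u s + A s j)) := by
      unfold Gmat
      rw [if_pos hb, hRi, hCj, hAiu, hAsj]
      calc (ru:Trop) + ((c:ℝ):Trop) + (rs:Trop)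
          = ((0:ℝ):Trop) + ((ru:Trop) + (((c:ℝ):Trop) + (rs:Trop))) := by
            rw [WithBot.coe_zero, zero_add, add_assoc]
        _ ≤ _ := by
            apply add_le_add_right
            apply add_le_add_right
            exact add_le_add_left hAus _
    rw [hF3]
    exact le_trans h6 h5
  · -- E i j finite
    have hG : Gmat E c i j = E i j := by unfold Gmat; rw [if_neg hb]
    rw [hG, hFm]
    have h1 : tpow E t i j ≤ tpow A t i j := tpow_le_of_le (E_le_A E c) t i j
    rwa [tpow_E_eq E hidem t ht] at h1

/-- The entry formula for the idempotent power of the perturbed matrix. -/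
lemma entry_formula (hidem : tmul E E = E) (hdiag : ∀ i, E i i = ((0:ℝ):Trop))
    (hc : c ≤ -(Sig E)) (Fm : Fin n → Fin n → Trop) (t : ℕ) (ht : 1 ≤ t)
    (hFm : Fm = tpow (Amat E c) t) (hFidem : tmul Fm Fm = Fm) :
    Fm = Gmat E c := by
  funext i j
  apply le_antisymm
  · rw [hFm]
    exact tpow_A_le_G E c hidem hdiag hc t ht i j
  · exact G_le_F E c hidem hdiag hc Fm t ht hFm hFidem i j

lemma G_diag (hdiag : ∀ i, E i i = ((0:ℝ):Trop)) (i : Fin n) :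
    Gmat E c i i = ((0:ℝ):Trop) := by
  unfold Gmat
  rw [if_neg (by rw [hdiag i]; simp), hdiag i]

/-- `E ⊗ G = G`. -/
lemma E_tmul_G (hidem : tmul E E = E) (hdiag : ∀ i, E i i = ((0:ℝ):Trop))
    (hc : c ≤ -(Sig E)) : tmul E (Gmat E c) = Gmat E c := by
  funext i j
  apply le_antisymm
  · apply Finset.sup_le
    intro k _
    have h1 : E i k ≤ Amat E c i k := E_le_A E c i k
    exact le_trans (add_le_add_left h1 _) (AG_le E c hidem hdiag hc i k j)
  · calc Gmat E c i j = E i i + Gmat E c i j := by rw [hdiag i, zero_add']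
      _ ≤ _ := Finset.le_sup (f := fun k => E i k + Gmat E c k j) (Finset.mem_univ i)

/-- `G' ⊗ G = G` when `c' ≤ c ≤ -Σ` and `c' ≤ -2Σ`. -/
lemma G'_tmul_G (hidem : tmul E E = E) (hdiag : ∀ i, E i i = ((0:ℝ):Trop))
    (c' : ℝ) (hc : c ≤ -(Sig E)) (hc'c : c' ≤ c) (hc2 : c' ≤ -(2 * Sig E)) :
    tmul (Gmat E c') (Gmat E c) = Gmat E c := by
  funext i j
  apply le_antisymm
  · apply Finset.sup_le
    intro k _
    by_cases h1 : E i k = ⊥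
    · have hG' : Gmat E c' i k =
          (Finset.univ.sup fun t => E i t) + ((c':ℝ):Trop)
            + (Finset.univ.sup fun s => E s k) := by
        unfold Gmat; rw [if_pos h1]
      by_cases h2 : E k j = ⊥
      · -- (Ri + c' + Ck) + (Rk + c + Cj) ≤ Ri + c + Cj ≤ G i j
        have hG : Gmat E c k j =
            (Finset.univ.sup fun t => E k t) + ((c:ℝ):Trop)
              + (Finset.univ.sup fun s => E s j) := by
          unfold Gmat; rw [if_pos h2]
        rw [hG', hG]
        refine le_trans ?_ (RC_le_G E c hdiag hc i j)
        obtain ⟨u1, ru1, hRi, _, hru10, _⟩ := row_sup_spec E hdiag i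
        obtain ⟨s1, rs1, hCk, _, hrs10, hrs1S⟩ := col_sup_spec E hdiag k
        obtain ⟨u2, ru2, hRk, _, hru20, hru2S⟩ := row_sup_spec E hdiag k
        obtain ⟨s2, rs2, hCj, _, hrs20, _⟩ := col_sup_spec E hdiag j
        rw [hRi, hCk, hRk, hCj, ← WithBot.coe_add, ← WithBot.coe_add, ← WithBot.coe_add,
          ← WithBot.coe_add, ← WithBot.coe_add, ← WithBot.coe_add, ← WithBot.coe_add,
          WithBot.coe_le_coe]
        linarith
      · -- (Ri + c' + Ck) + E k j ≤ Ri + c' + Cj ≤ Ri + c + Cj ≤ G i j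
        have hG : Gmat E c k j = E k j := by unfold Gmat; rw [if_neg h2]
        rw [hG', hG]
        refine le_trans ?_ (RC_le_G E c hdiag hc i j)
        have habs := col_absorb E hidem hdiag h2
        obtain ⟨u1, ru1, hRi, _, _, _⟩ := row_sup_spec E hdiag i
        obtain ⟨s1, rs1, hCk, _, _, _⟩ := col_sup_spec E hdiag k
        obtain ⟨s2, rs2, hCj, _, _, _⟩ := col_sup_spec E hdiag j
        obtain ⟨e, he⟩ : ∃ e : ℝ, E k j = (e:Trop) := ⟨_, (coe_unbot _ h2).symm⟩
        have habs' : rs1 + e ≤ rs2 := by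
          rw [hCk, hCj, he, ← WithBot.coe_add] at habs
          exact_mod_cast habs
        rw [hRi, hCk, hCj, he, ← WithBot.coe_add, ← WithBot.coe_add, ← WithBot.coe_add,
          ← WithBot.coe_add, ← WithBot.coe_add, WithBot.coe_le_coe]
        linarith
    · have hG' : Gmat E c' i k = E i k := by unfold Gmat; rw [if_neg h1]
      rw [hG']
      have h2 : E i k ≤ Amat E c i k := E_le_A E c i k
      exact le_trans (add_le_add_left h2 _) (AG_le E c hidem hdiag hc i k j)
  · calc Gmat E c i j = Gmat E c' i i + Gmat E c i j := by
          rw [G_diag E c' hdiag i, zero_add']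
      _ ≤ _ := Finset.le_sup (f := fun k => Gmat E c' i k + Gmat E c k j) (Finset.mem_univ i)

/-- The key contradiction: no two distinct indices with `G i k + G k i = 0`. -/
lemma key_contra (hidem : tmul E E = E) (hdiag : ∀ i, E i i = ((0:ℝ):Trop))
    (hfull : rowRank E = n) (hc : c < -(Sig E)) {i k : Fin n} (hik : i ≠ k)
    (h : Gmat E c i k + Gmat E c k i = ((0:ℝ):Trop)) : False := by
  have hterm : ∀ a b d, E a b + E b d ≤ E a d := by
    intro a b d
    conv_rhs => rw [← hidem]
    exact Finset.le_sup (f := fun l => E a l + E l d) (Finset.mem_univ b)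
  by_cases h1 : E i k = ⊥ <;> by_cases h2 : E k i = ⊥
  · -- both bot
    have hGik : Gmat E c i k =
        (Finset.univ.sup fun t => E i t) + ((c:ℝ):Trop)
          + (Finset.univ.sup fun s => E s k) := by unfold Gmat; rw [if_pos h1]
    have hGki : Gmat E c k i =
        (Finset.univ.sup fun t => E k t) + ((c:ℝ):Trop)
          + (Finset.univ.sup fun s => E s i) := by unfold Gmat; rw [if_pos h2]
    obtain ⟨u1, ru1, hRi, hEu1, _, _⟩ := row_sup_spec E hdiag i
    obtain ⟨s1, rs1, hCk, hEs1, _, _⟩ := col_sup_spec E hdiag k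
    obtain ⟨u2, ru2, hRk, hEu2, _, _⟩ := row_sup_spec E hdiag k
    obtain ⟨s2, rs2, hCi, hEs2, _, _⟩ := col_sup_spec E hdiag i
    rw [hGik, hGki, hRi, hCk, hRk, hCi, ← WithBot.coe_add, ← WithBot.coe_add,
      ← WithBot.coe_add, ← WithBot.coe_add, ← WithBot.coe_add] at h
    have heq : ru1 + c + rs1 + (ru2 + c + rs2) = 0 := by exact_mod_cast h
    -- pair bounds
    have hp1 : ru1 + rs1 ≤ Sig E := by
      have hd : ((i, u1) : Fin n × Fin n) ≠ (s1, k) := by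
        intro hcontra
        have h1' : u1 = k := congrArg Prod.snd hcontra
        rw [h1'] at hEu1
        exact absurd (h1.symm.trans hEu1) (by simp)
      have := pair_le_Sig E hd
      rw [hEu1, hEs1] at this
      simp only [unbot_of_coe] at this
      have a1 : ru1 ≤ |ru1| := le_abs_self _
      have a2 : rs1 ≤ |rs1| := le_abs_self _
      linarith
    have hp2 : ru2 + rs2 ≤ Sig E := by
      have hd : ((k, u2) : Fin n × Fin n) ≠ (s2, i) := by
        intro hcontra
        have h1' : u2 = i := congrArg Prod.snd hcontra
        rw [h1'] at hEu2
        exact absurd (h2.symm.trans hEu2) (by simp)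
      have := pair_le_Sig E hd
      rw [hEu2, hEs2] at this
      simp only [unbot_of_coe] at this
      have a1 : ru2 ≤ |ru2| := le_abs_self _
      have a2 : rs2 ≤ |rs2| := le_abs_self _
      linarith
    linarith
  · -- E i k bot, E k i finite
    have hGik : Gmat E c i k =
        (Finset.univ.sup fun t => E i t) + ((c:ℝ):Trop)
          + (Finset.univ.sup fun s => E s k) := by unfold Gmat; rw [if_pos h1]
    have hGki : Gmat E c k i = E k i := by unfold Gmat; rw [if_neg h2]
    obtain ⟨u1, ru1, hRi, hEu1, _, _⟩ := row_sup_spec E hdiag i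
    obtain ⟨s1, rs1, hCk, hEs1, _, _⟩ := col_sup_spec E hdiag k
    obtain ⟨z, hz⟩ : ∃ z : ℝ, E k i = (z:Trop) := ⟨_, (coe_unbot _ h2).symm⟩
    rw [hGik, hGki, hRi, hCk, hz, ← WithBot.coe_add, ← WithBot.coe_add,
      ← WithBot.coe_add] at h
    have heq : ru1 + c + rs1 + z = 0 := by exact_mod_cast h
    have htr : |ru1| + |rs1| + |z| ≤ Sig E := by
      have htr' := triple_le_Sig E (p := (i,u1)) (q := (s1,k)) (r := (k,i))
        (by intro hcontra
            have hu1k : u1 = k := congrArg Prod.snd hcontra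
            rw [hu1k] at hEu1
            exact absurd (h1.symm.trans hEu1) (by simp))
        (by intro hcontra
            have : i = k := congrArg Prod.fst hcontra
            exact hik this)
        (by intro hcontra
            have : k = i := congrArg Prod.snd hcontra
            exact hik this.symm)
      rwa [hEu1, hEs1, hz, unbot_of_coe, unbot_of_coe, unbot_of_coe] at htr'
    have a1 : ru1 ≤ |ru1| := le_abs_self _
    have a2 : rs1 ≤ |rs1| := le_abs_self _
    have a3 : z ≤ |z| := le_abs_self _
    linarith
  · -- E i k finite, E k i bot
    have hGik : Gmat E c i k = E i k := by unfold Gmat; rw [if_neg h1]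
    have hGki : Gmat E c k i =
        (Finset.univ.sup fun t => E k t) + ((c:ℝ):Trop)
          + (Finset.univ.sup fun s => E s i) := by unfold Gmat; rw [if_pos h2]
    obtain ⟨u2, ru2, hRk, hEu2, _, _⟩ := row_sup_spec E hdiag k
    obtain ⟨s2, rs2, hCi, hEs2, _, _⟩ := col_sup_spec E hdiag i
    obtain ⟨z, hz⟩ : ∃ z : ℝ, E i k = (z:Trop) := ⟨_, (coe_unbot _ h1).symm⟩
    rw [hGik, hGki, hRk, hCi, hz, ← WithBot.coe_add, ← WithBot.coe_add,
      ← WithBot.coe_add] at h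
    have heq : z + (ru2 + c + rs2) = 0 := by exact_mod_cast h
    have htr : |ru2| + |rs2| + |z| ≤ Sig E := by
      have htr' := triple_le_Sig E (p := (k,u2)) (q := (s2,i)) (r := (i,k))
        (by intro hcontra
            have hu2i : u2 = i := congrArg Prod.snd hcontra
            rw [hu2i] at hEu2
            exact absurd (h2.symm.trans hEu2) (by simp))
        (by intro hcontra
            have : k = i := congrArg Prod.fst hcontra
            exact hik this.symm)
        (by intro hcontra
            have h6 : i = k := congrArg Prod.snd hcontra
            exact hik h6)
      rwa [hEu2, hEs2, hz, unbot_of_coe, unbot_of_coe, unbot_of_coe] at htr'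
    have a1 : ru2 ≤ |ru2| := le_abs_self _
    have a2 : rs2 ≤ |rs2| := le_abs_self _
    have a3 : z ≤ |z| := le_abs_self _
    linarith
  · -- both finite: rows of E are proportional, contradiction with full rank
    have hGik : Gmat E c i k = E i k := by unfold Gmat; rw [if_neg h1]
    have hGki : Gmat E c k i = E k i := by unfold Gmat; rw [if_neg h2]
    rw [hGik, hGki] at h
    -- h : E i k + E k i = 0
    have hprop : ∀ j, E k j = E k i + E i j := by
      intro j
      by_cases hj : E i j = ⊥
      · have hkj : E k j = ⊥ := by
          have h3 := hterm i k j
          rw [hj] at h3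
          have h4 := le_bot_iff.1 h3
          rcases WithBot.add_eq_bot.1 h4 with h5 | h5
          · exact absurd h5 h1
          · exact h5
        rw [hkj, hj, WithBot.add_bot]
      · apply le_antisymm
        · have h3 := add_le_add_right (hterm i k j) (E k i)
          calc E k j = (E k i + E i k) + E k j := by
                rw [add_comm (E k i) (E i k), h, zero_add']
            _ = E k i + (E i k + E k j) := by rw [add_assoc]
            _ ≤ E k i + E i j := h3
        · exact hterm k i j
    exact E_rows_nonprop E hfull (fun hki => hik hki.symm) (E k i) hprop

lemma G_nonprop_rows (hidem : tmul E E = E) (hdiag : ∀ i, E i i = ((0:ℝ):Trop))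
    (hfull : rowRank E = n) (hc : c < -(Sig E)) :
    ∀ i k, (∀ j, Gmat E c k j = Gmat E c k i + Gmat E c i j) → k = i := by
  intro i k h
  by_contra hik
  apply key_contra E c hidem hdiag hfull hc (i := i) (k := k) (fun hh => hik hh.symm)
  have h1 := h k
  rw [G_diag E c hdiag k] at h1
  rw [add_comm]
  exact h1.symm

lemma G_nonprop_cols (hidem : tmul E E = E) (hdiag : ∀ i, E i i = ((0:ℝ):Trop))
    (hfull : rowRank E = n) (hc : c < -(Sig E)) :
    ∀ i k, (∀ j, transp (Gmat E c) k j = transp (Gmat E c) k i + transp (Gmat E c) i j)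
      → k = i := by
  intro i k h
  by_contra hik
  apply key_contra E c hidem hdiag hfull hc (i := i) (k := k) (fun hh => hik hh.symm)
  have h1 := h k
  unfold transp at h1
  rw [G_diag E c hdiag k] at h1
  exact h1.symm

end Formula2

lemma genBy_empty {n : ℕ} : genBy (∅ : Set (Fin n → Trop)) = ∅ := by
  apply Set.Subset.antisymm
  · apply genBy_min
    · constructor
      · intro x hx; exact absurd hx (Set.notMem_empty x)
      · intro c x hx; exact absurd hx (Set.notMem_empty x)
    · exact Set.Subset.rfl
  · exact Set.empty_subset _

end S14

open S14

/-- Let `E` be a full rank idempotent, `N < -∑ |E_{ij}|` (sum over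
finite entries), and for each `m ≥ 1` let `F m` be an idempotent power of the matrix
obtained from `E` by replacing every `-∞` entry by `m·N`. Then each `F m` is a full rank
idempotent with all entries finite and explicit entries as stated, `C(F m) ⊆ C(F (m+1))`,
and `C(E) ∩ ℝ^n = ⋃_m (C(F m) \ {(-∞,…,-∞)})`. -/
theorem stmt_14 {n : ℕ} (E : Fin n → Fin n → Trop)
    (hidem : tmul E E = E) (hfull : rowRank E = n)
    (N : ℝ) (hN : N < -(∑ i, ∑ j, |(E i j).unbotD 0|))
    (F : ℕ → (Fin n → Fin n → Trop))
    (hF : ∀ m, 1 ≤ m → ∃ t, 1 ≤ t ∧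
      F m = tpow (fun i j => if E i j = ⊥ then (((m : ℝ) * N : ℝ) : Trop) else E i j) t ∧
      tmul (F m) (F m) = F m) :
    (∀ m, 1 ≤ m →
      (rowRank (F m) = n ∧ colRank (F m) = n) ∧
      (∀ i j, F m i j ≠ ⊥) ∧
      (∀ i j, F m i j =
        if E i j = ⊥ then
          (Finset.univ.sup fun t => E i t) + (((m : ℝ) * N : ℝ) : Trop) +
            (Finset.univ.sup fun s => E s j)
        else E i j) ∧
      colSpace (F m) ⊆ colSpace (F (m + 1))) ∧
    (colSpace E ∩ {x | ∀ i, x i ≠ ⊥}) =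
      ⋃ (m : ℕ) (_ : 1 ≤ m), (colSpace (F m) \ {fun _ => (⊥ : Trop)}) := by
  classical
  by_cases hn : 0 < n
  case neg =>
    -- degenerate case n = 0
    have hn0 : n = 0 := by omega
    subst hn0
    have hcs : ∀ (X : Fin 0 → Fin 0 → Trop), colSpace X = ∅ := by
      intro X
      have h1 : {v : Fin 0 → Trop | ∃ j, v = fun i => X i j} = ∅ :=
        Set.eq_empty_iff_forall_notMem.2 (fun v ⟨j, _⟩ => j.elim0)
      show genBy _ = ∅
      rw [h1, genBy_empty]
    have hrs : ∀ (X : Fin 0 → Fin 0 → Trop), rowSpace X = genBy (∅ : Set (Fin 0 → Trop)) := by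
      intro X
      have h1 : {v : Fin 0 → Trop | ∃ i, v = fun j => X i j} = ∅ :=
        Set.eq_empty_iff_forall_notMem.2 (fun v ⟨i, _⟩ => i.elim0)
      show genBy _ = genBy _
      rw [h1]
    have hrk : ∀ (X : Fin 0 → Fin 0 → Trop), rowRank X = 0 := by
      intro X
      apply Nat.eq_zero_of_le_zero
      apply Nat.sInf_le
      exact ⟨∅, Finset.card_empty, by rw [Finset.coe_empty, ← hrs]⟩
    have hck : ∀ (X : Fin 0 → Fin 0 → Trop), colRank X = 0 := by
      intro X
      apply Nat.eq_zero_of_le_zero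
      apply Nat.sInf_le
      refine ⟨∅, Finset.card_empty, ?_⟩
      rw [Finset.coe_empty, genBy_empty, hcs]
    refine ⟨fun m _ => ⟨⟨hrk _, hck _⟩, fun i => i.elim0, fun i => i.elim0, ?_⟩, ?_⟩
    · rw [hcs, hcs]
    · rw [hcs]
      ext x
      simp [hcs]
  case pos =>
    haveI : Nonempty (Fin n) := Fin.pos_iff_nonempty.mp hn
    have hNS : N < -(Sig E) := hN
    have hSnn : 0 ≤ Sig E := Sig_nonneg E
    have hN0 : N < 0 := by linarith
    -- diagonal of E is zero
    have hdiag : ∀ i, E i i = ((0:ℝ):Trop) := by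
      obtain ⟨t, ht, heq, hidm⟩ := hF 1 le_rfl
      exact diag_zero E hidem hfull (((1:ℕ) : ℝ) * N) (by push_cast; linarith)
        ⟨t, ht, F 1, heq, hidm⟩
    -- per-m coefficients
    have hcle : ∀ m : ℕ, 1 ≤ m → ((m:ℝ) * N) ≤ N := by
      intro m hm
      have h1 : (1:ℝ) ≤ (m:ℝ) := by exact_mod_cast hm
      nlinarith
    have hcleS : ∀ m : ℕ, 1 ≤ m → ((m:ℝ) * N) ≤ -(Sig E) := fun m hm =>
      le_trans (hcle m hm) (le_of_lt hNS)
    have hcltS : ∀ m : ℕ, 1 ≤ m → ((m:ℝ) * N) < -(Sig E) := fun m hm =>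
      lt_of_le_of_lt (hcle m hm) hNS
    -- entry formula for each m
    have hFG : ∀ m : ℕ, 1 ≤ m → F m = Gmat E ((m:ℝ) * N) ∧ tmul (F m) (F m) = F m := by
      intro m hm
      obtain ⟨t, ht, heq, hidm⟩ := hF m hm
      exact ⟨entry_formula E ((m:ℝ) * N) hidem hdiag (hcleS m hm) (F m) t ht heq hidm, hidm⟩
    constructor
    · intro m hm
      obtain ⟨hFGm, hFidem⟩ := hFG m hm
      have hGidem : tmul (Gmat E ((m:ℝ)*N)) (Gmat E ((m:ℝ)*N)) = Gmat E ((m:ℝ)*N) := by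
        rw [← hFGm]; exact hFidem
      refine ⟨⟨?_, ?_⟩, ?_, ?_, ?_⟩
      · -- row rank
        rw [hFGm]
        exact rowRank_eq_n hn _ hGidem (G_ne_bot E _ hdiag) (G_diag E _ hdiag)
          (G_nonprop_rows E _ hidem hdiag hfull (hcltS m hm))
      · -- column rank
        rw [hFGm, colRank_eq_rowRank_transp]
        have htidem : tmul (transp (Gmat E ((m:ℝ)*N))) (transp (Gmat E ((m:ℝ)*N)))
            = transp (Gmat E ((m:ℝ)*N)) :=
          (transp_tmul _ _).symm.trans (congrArg transp hGidem)
        exact rowRank_eq_n hn _ htidem (fun i j => G_ne_bot E _ hdiag j i)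
          (fun i => G_diag E _ hdiag i)
          (G_nonprop_cols E _ hidem hdiag hfull (hcltS m hm))
      · -- finiteness
        intro i j
        rw [hFGm]
        exact G_ne_bot E _ hdiag i j
      · -- formula
        intro i j
        rw [hFGm]
        rfl
      · -- column space monotone
        have hm1 : 1 ≤ m + 1 := by omega
        obtain ⟨hFGm1, _⟩ := hFG (m+1) hm1
        have hprod : tmul (F (m+1)) (F m) = F m := by
          rw [hFGm, hFGm1]
          apply G'_tmul_G E ((m:ℝ)*N) hidem hdiag (((m+1:ℕ):ℝ)*N) (hcleS m hm)
          · have h1 : (m:ℝ) ≤ ((m+1:ℕ):ℝ) := by push_cast; linarith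
            nlinarith
          · have h1 : (2:ℝ) ≤ ((m+1:ℕ):ℝ) := by
              push_cast
              have : (1:ℝ) ≤ (m:ℝ) := by exact_mod_cast hm
              linarith
            nlinarith
        rw [colSpace_eq_range hn, colSpace_eq_range hn]
        rintro x ⟨d, rfl⟩
        exact ⟨tvmul (F m) d, by rw [← tvmul_assoc, hprod]⟩
    · -- the union characterisation
      apply Set.Subset.antisymm
      · rintro x ⟨hxcol, hxfin⟩
        have hxfin' : ∀ i, x i ≠ ⊥ := hxfin
        rw [colSpace_eq_range hn] at hxcol
        obtain ⟨d, rfl⟩ := hxcol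
        -- choose m large enough
        set g : Fin n × Fin n → ℝ := fun p =>
          if E p.1 p.2 = ⊥ ∧ d p.2 ≠ ⊥ then
            (tvmul E d p.1).unbotD 0 -
              (((Finset.univ.sup fun t => E p.1 t).unbotD 0) +
               (((Finset.univ.sup fun s => E s p.2).unbotD 0) + (d p.2).unbotD 0))
          else 0 with hg
        have hne : (Finset.univ ×ˢ Finset.univ : Finset (Fin n × Fin n)).Nonempty := by
          simp [Finset.univ_nonempty]
        set B : ℝ := (Finset.univ ×ˢ Finset.univ).inf' hne g with hB
        obtain ⟨m, hmge⟩ := exists_nat_ge (max 1 (B / N))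
        have hm1 : 1 ≤ m := by
          have h1 : (1:ℝ) ≤ (m:ℝ) := le_trans (le_max_left _ _) hmge
          exact_mod_cast h1
        have hmN : (m:ℝ) * N ≤ B :=
          (div_le_iff_of_neg hN0).1 (le_trans (le_max_right _ _) hmge)
        obtain ⟨hFGm, _⟩ := hFG m hm1
        have heq : tvmul (F m) d = tvmul E d := by
          funext i
          apply le_antisymm
          · apply Finset.sup_le
            intro k _
            by_cases h1 : E i k = ⊥
            · by_cases h2 : d k = ⊥
              · rw [h2, WithBot.add_bot]; exact bot_le
              · -- use the choice of m
                have hFik : F m i k =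
                    (Finset.univ.sup fun t => E i t) + (((m:ℝ)*N : ℝ):Trop)
                      + (Finset.univ.sup fun s => E s k) := by
                  rw [hFGm]; unfold Gmat; rw [if_pos h1]
                obtain ⟨u, ru, hRi, _, _, _⟩ := row_sup_spec E hdiag i
                obtain ⟨s, rs, hCk, _, _, _⟩ := col_sup_spec E hdiag k
                obtain ⟨dk, hdk⟩ : ∃ dk : ℝ, d k = (dk:Trop) := ⟨_, (coe_unbot _ h2).symm⟩
                obtain ⟨xr, hxr⟩ : ∃ xr : ℝ, tvmul E d i = (xr:Trop) :=
                  ⟨_, (coe_unbot _ (hxfin' i)).symm⟩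
                have hBg : B ≤ g (i, k) := Finset.inf'_le g (by simp)
                have hgval : g (i, k) = xr - (ru + (rs + dk)) := by
                  rw [hg]
                  simp only [if_pos (by exact ⟨h1, h2⟩ : E i k = ⊥ ∧ d k ≠ ⊥)]
                  rw [hxr, hRi, hCk, hdk]
                  simp [unbot_of_coe]
                rw [hFik, hRi, hCk, hdk, hxr, ← WithBot.coe_add, ← WithBot.coe_add,
                  ← WithBot.coe_add, WithBot.coe_le_coe]
                rw [hgval] at hBg
                linarith [hmN]
            · have hFik : F m i k = E i k := by
                rw [hFGm]; unfold Gmat; rw [if_neg h1]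
              rw [hFik]
              exact Finset.le_sup (f := fun k => E i k + d k) (Finset.mem_univ k)
          · apply Finset.sup_le
            intro k _
            have h1 : E i k ≤ F m i k := by rw [hFGm]; exact E_le_G E _ i k
            exact le_trans (add_le_add_left h1 _)
              (Finset.le_sup (f := fun k => F m i k + d k) (Finset.mem_univ k))
        refine Set.mem_iUnion.2 ⟨m, Set.mem_iUnion.2 ⟨hm1, ?_, ?_⟩⟩
        · rw [colSpace_eq_range hn]
          exact ⟨d, heq⟩
        · intro hmem
          have hx0 : tvmul E d = fun _ => (⊥ : Trop) := hmem
          obtain ⟨i0⟩ : Nonempty (Fin n) := inferInstance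
          exact hxfin' i0 (congrFun hx0 i0)
      · rintro x hx
        rw [Set.mem_iUnion] at hx
        obtain ⟨m, hx⟩ := hx
        rw [Set.mem_iUnion] at hx
        obtain ⟨hm1, hxmem, hxne⟩ := hx
        obtain ⟨hFGm, _⟩ := hFG m hm1
        rw [colSpace_eq_range hn] at hxmem
        obtain ⟨d, rfl⟩ := hxmem
        have hdk : ∃ k, d k ≠ ⊥ := by
          by_contra hcon
          push_neg at hcon
          apply hxne
          show tvmul (F m) d = fun _ => (⊥ : Trop)
          funext i
          show (Finset.univ.sup fun k => F m i k + d k) = ⊥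
          exact le_bot_iff.1 (Finset.sup_le fun k _ =>
            le_of_eq (by rw [hcon k, WithBot.add_bot]))
        obtain ⟨k0, hk0⟩ := hdk
        constructor
        · rw [colSpace_eq_range hn]
          refine ⟨tvmul (F m) d, ?_⟩
          have hEF : tmul E (F m) = F m := by
            rw [hFGm]
            exact E_tmul_G E _ hidem hdiag (hcleS m hm1)
          rw [← tvmul_assoc, hEF]
        · intro i
          have hterm : F m i k0 + d k0 ≤ tvmul (F m) d i :=
            Finset.le_sup (f := fun k => F m i k + d k) (Finset.mem_univ k0)
          have htne : F m i k0 + d k0 ≠ ⊥ := by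
            apply add_ne_bot'
            · rw [hFGm]; exact G_ne_bot E _ hdiag i k0
            · exact hk0
          intro hb
          rw [hb] at hterm
          exact htne (le_bot_iff.1 hterm)
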